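/- Let m ≥ 1, 0 ≤ α < 1, 0 < λ_1 ≤ … ≤ λ_m, and L_F > 0. On ℝ^m let |·| denote the Euclidean norm and |p|_α = (Σ_{i=1}^m λ_i^{2α} p_i²)^{1/2} the weighted α-norm, and let A : ℝ^m → ℝ^m be the diagonal linear map (Ap)_i = λ_i p_i. Let B : ℝ → L(ℝ^m, ℝ^m) be continuous with |B(t)w| ≤ 2 L_F |w|_α for all t ≤ 0 and all w ∈ ℝ^m. Let Θ : ℝ → L(ℝ^m, ℝ^m) be differentiable with Θ(0) = Id and Θ'(t) = −A ∘ Θ(t) + B(t) ∘ Θ(t) for all t ≤ 0. Then for every t ≤ 0 and every z ∈ ℝ^m, |Θ(t) z|_α ≤ e^{−(2 L_F λ_m^α + λ_m) t} |z|_α. -/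

import Mathlib

/-- Backward exponential bound for the linearized flow `Θ' = −A∘Θ + B(t)∘Θ`, `Θ(0) = Id`,
when `A` is diagonal with entries `0 < λ_1 ≤ … ≤ λ_m` and `|B(t)w| ≤ 2 L_F |w|_α` for
`t ≤ 0`, where `|w|_α = (Σ λ_i^{2α} w_i²)^{1/2}`:
`|Θ(t) z|_α ≤ e^{−(2 L_F λ_m^α + λ_m) t} |z|_α` for `t ≤ 0`. -/
theorem linearized_flow_backward_bound
    (m : ℕ) (hm : 0 < m) (α : ℝ) (hα0 : 0 ≤ α) (hα1 : α < 1)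
    (lam : Fin m → ℝ) (hpos : ∀ i, 0 < lam i) (hmono : Monotone lam)
    (LF : ℝ) (hLF : 0 < LF)
    (A : EuclideanSpace ℝ (Fin m) →L[ℝ] EuclideanSpace ℝ (Fin m))
    (hA : ∀ (p : EuclideanSpace ℝ (Fin m)) (i : Fin m), A p i = lam i * p i)
    (B : ℝ → (EuclideanSpace ℝ (Fin m) →L[ℝ] EuclideanSpace ℝ (Fin m)))
    (hBcont : Continuous B)
    (hB : ∀ t ≤ (0 : ℝ), ∀ w : EuclideanSpace ℝ (Fin m),
      ‖B t w‖ ≤ 2 * LF * Real.sqrt (∑ i, lam i ^ (2 * α) * (w i) ^ 2))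
    (Θ : ℝ → (EuclideanSpace ℝ (Fin m) →L[ℝ] EuclideanSpace ℝ (Fin m)))
    (hΘ0 : Θ 0 = ContinuousLinearMap.id ℝ (EuclideanSpace ℝ (Fin m)))
    (hΘ : ∀ t ≤ (0 : ℝ), HasDerivAt Θ (-(A.comp (Θ t)) + (B t).comp (Θ t)) t) :
    ∀ t ≤ (0 : ℝ), ∀ z : EuclideanSpace ℝ (Fin m),
      Real.sqrt (∑ i, lam i ^ (2 * α) * (Θ t z i) ^ 2)
        ≤ Real.exp (-((2 * LF * lam ⟨m - 1, by omega⟩ ^ α + lam ⟨m - 1, by omega⟩) * t)) *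
          Real.sqrt (∑ i, lam i ^ (2 * α) * (z i) ^ 2) := by

  intro t ht z
  have hk : m - 1 < m := by omega
  set k : Fin m := ⟨m - 1, hk⟩ with hkdef
  set lm : ℝ := lam k with hlmdef
  have hlmpos : 0 < lm := hpos k
  have hle : ∀ i, lam i ≤ lm := by
    intro i
    exact hmono (by simp only [Fin.le_def, hkdef]; omega)
  set c : ℝ := 2 * LF * lm ^ α + lm with hcdef
  have hcpos : 0 < c := by
    have h1 : (0:ℝ) < lm ^ α := Real.rpow_pos_of_pos hlmpos α
    rw [hcdef]; nlinarith
  set u : ℝ → EuclideanSpace ℝ (Fin m) := fun s => Θ s z with hudef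
  set v : ℝ → EuclideanSpace ℝ (Fin m) := fun s => B s (u s) with hvdef
  set w : ℝ → EuclideanSpace ℝ (Fin m) :=
    fun s => (-(A.comp (Θ s)) + (B s).comp (Θ s)) z with hwdef
  set φ : ℝ → ℝ := fun s => ∑ i, lam i ^ (2 * α) * (u s i) ^ 2 with hφdef
  have hterm : ∀ (s : ℝ) (i : Fin m), (0:ℝ) ≤ lam i ^ (2 * α) * (u s i) ^ 2 :=
    fun s i => mul_nonneg (Real.rpow_nonneg (hpos i).le _) (sq_nonneg _)
  have hφnonneg : ∀ s, 0 ≤ φ s := by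
    intro s
    exact Finset.sum_nonneg fun i _ => hterm s i
  -- derivative of u
  have hu' : ∀ s ≤ (0 : ℝ), HasDerivAt u (w s) s := by
    intro s hs
    have h1 := (hΘ s hs).clm_apply (hasDerivAt_const s z)
    rw [map_zero, add_zero] at h1
    exact h1
  -- derivative of coordinates
  have hui : ∀ s ≤ (0 : ℝ), ∀ i : Fin m,
      HasDerivAt (fun r => u r i) (w s i) s := by
    intro s hs i
    exact (EuclideanSpace.proj i).hasFDerivAt.comp_hasDerivAt s (hu' s hs)
  -- coordinates of w
  have hwcoord : ∀ s, ∀ i : Fin m, w s i = -(lam i * u s i) + v s i := by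
    intro s i
    show ((-(A.comp (Θ s)) + (B s).comp (Θ s)) z) i = _
    rw [ContinuousLinearMap.add_apply, ContinuousLinearMap.neg_apply,
      ContinuousLinearMap.comp_apply, ContinuousLinearMap.comp_apply,
      PiLp.add_apply, PiLp.neg_apply, hA]
  -- derivative of φ
  set φ' : ℝ → ℝ := fun s => ∑ i, lam i ^ (2 * α) * (2 * u s i * w s i) with hφ'def
  have hφderiv : ∀ s ≤ (0 : ℝ), HasDerivAt φ (φ' s) s := by
    intro s hs
    have h1 : HasDerivAt (fun r => ∑ i, lam i ^ (2 * α) * (u r i) ^ 2)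
        (∑ i, lam i ^ (2 * α) * ((2 : ℕ) * u s i ^ (2 - 1) * w s i)) s := by
      apply HasDerivAt.fun_sum
      intro i _
      exact ((hui s hs i).pow 2).const_mul _
    have h2 : φ' s = ∑ i, lam i ^ (2 * α) * ((2 : ℕ) * u s i ^ (2 - 1) * w s i) := by
      show (∑ i, lam i ^ (2 * α) * (2 * u s i * w s i)) = _
      apply Finset.sum_congr rfl
      intro i _
      push_cast
      ring
    rw [h2]
    exact h1
  -- the key differential inequality
  have key : ∀ s ≤ (0 : ℝ), -(2 * c) * φ s ≤ φ' s := by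
    intro s hs
    have hv : ‖v s‖ ≤ 2 * LF * Real.sqrt (φ s) := hB s hs (u s)
    have hvsq : ∑ i, (v s i) ^ 2 ≤ 4 * LF ^ 2 * φ s := by
      have h1 : ∑ i, (v s i) ^ 2 = ‖v s‖ ^ 2 := by
        rw [EuclideanSpace.norm_eq, Real.sq_sqrt]
        · exact Finset.sum_congr rfl fun i _ => by rw [Real.norm_eq_abs, sq_abs]
        · exact Finset.sum_nonneg fun i _ => by positivity
      have h2 : ‖v s‖ ^ 2 ≤ (2 * LF * Real.sqrt (φ s)) ^ 2 := by
        apply sq_le_sq' _ hv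
        have h3 : (0:ℝ) ≤ 2 * LF * Real.sqrt (φ s) := by positivity
        linarith [norm_nonneg (v s)]
      have h3 : (2 * LF * Real.sqrt (φ s)) ^ 2 = 4 * LF ^ 2 * φ s := by
        rw [mul_pow, mul_pow, Real.sq_sqrt (hφnonneg s)]
        ring
      linarith
    set S : ℝ := ∑ i, (lam i ^ (2 * α) * u s i) * v s i with hSdef
    have hlm2α : ∀ i, lam i ^ (2 * α) ≤ lm ^ (2 * α) := by
      intro i
      exact Real.rpow_le_rpow (hpos i).le (hle i) (by positivity)
    have hsum1 : ∑ i, (lam i ^ (2 * α) * u s i) ^ 2 ≤ lm ^ (2 * α) * φ s := by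
      show _ ≤ lm ^ (2*α) * ∑ i, lam i ^ (2 * α) * (u s i) ^ 2
      rw [Finset.mul_sum]
      apply Finset.sum_le_sum
      intro i _
      calc (lam i ^ (2 * α) * u s i) ^ 2
          = lam i ^ (2*α) * (lam i ^ (2*α) * (u s i)^2) := by ring
        _ ≤ lm ^ (2*α) * (lam i ^ (2*α) * (u s i)^2) :=
            mul_le_mul_of_nonneg_right (hlm2α i) (hterm s i)
    have hSsq : S ^ 2 ≤ (2 * LF * lm ^ α * φ s) ^ 2 := by
      have hCS := Finset.sum_mul_sq_le_sq_mul_sq Finset.univ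
        (fun i => lam i ^ (2 * α) * u s i) (fun i => v s i)
      have hrw : lm ^ (2*α) = (lm ^ α) ^ 2 := by
        rw [← Real.rpow_natCast (lm ^ α) 2, ← Real.rpow_mul hlmpos.le]
        norm_num [mul_comm]
      have h1 : (∑ i, (lam i ^ (2 * α) * u s i) ^ 2) * (∑ i, (v s i) ^ 2)
          ≤ (lm ^ (2*α) * φ s) * (4 * LF^2 * φ s) := by
        apply mul_le_mul hsum1 hvsq (Finset.sum_nonneg fun i _ => sq_nonneg _)
        exact mul_nonneg (Real.rpow_nonneg hlmpos.le _) (hφnonneg s)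
      calc S ^ 2 ≤ _ := hCS
        _ ≤ (lm ^ (2*α) * φ s) * (4 * LF^2 * φ s) := h1
        _ = (2 * LF * lm ^ α * φ s) ^ 2 := by rw [hrw]; ring
    have hSbound : -(2 * LF * lm ^ α * φ s) ≤ S := by
      have hKnn : (0:ℝ) ≤ 2 * LF * lm ^ α * φ s := by
        have h1 : (0:ℝ) ≤ lm ^ α := (Real.rpow_pos_of_pos hlmpos α).le
        have := hφnonneg s
        positivity
      have habs : |S| ≤ 2 * LF * lm ^ α * φ s := by
        rw [← Real.sqrt_sq_eq_abs]
        calc Real.sqrt (S ^ 2) ≤ Real.sqrt ((2 * LF * lm ^ α * φ s) ^ 2) :=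
              Real.sqrt_le_sqrt hSsq
          _ = 2 * LF * lm ^ α * φ s := Real.sqrt_sq hKnn
      linarith [neg_abs_le S, (abs_le.mp habs).1]
    have hdiag : ∑ i, lam i * (lam i ^ (2 * α) * (u s i)^2) ≤ lm * φ s := by
      show _ ≤ lm * ∑ i, lam i ^ (2 * α) * (u s i) ^ 2
      rw [Finset.mul_sum]
      apply Finset.sum_le_sum
      intro i _
      exact mul_le_mul_of_nonneg_right (hle i) (hterm s i)
    have hexp : φ' s = -2 * (∑ i, lam i * (lam i ^ (2*α) * (u s i)^2)) + 2 * S := by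
      show (∑ i, lam i ^ (2 * α) * (2 * u s i * w s i)) = _
      rw [hSdef, Finset.mul_sum, Finset.mul_sum, ← Finset.sum_add_distrib]
      apply Finset.sum_congr rfl
      intro i _
      rw [hwcoord s i]
      ring
    rw [hexp]
    have heq : -(2*c) * φ s = -2 * (lm * φ s) + 2 * (-(2 * LF * lm ^ α * φ s)) := by
      rw [hcdef]; ring
    rw [heq]
    have := mul_le_mul_of_nonneg_left hdiag (by norm_num : (0:ℝ) ≤ 2)
    linarith [hdiag, hSbound]
  -- Gronwall
  set g : ℝ → ℝ := fun s => Real.exp (2 * c * s) * φ s with hgdef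
  have hg : ∀ s ≤ (0:ℝ), HasDerivAt g
      (2 * c * Real.exp (2 * c * s) * φ s + Real.exp (2 * c * s) * φ' s) s := by
    intro s hs
    have h1 : HasDerivAt (fun r => Real.exp (2 * c * r)) (2 * c * Real.exp (2 * c * s)) s := by
      have h2 := ((hasDerivAt_id s).const_mul (2 * c)).exp
      have h3 : 2 * c * Real.exp (2 * c * s) = Real.exp (2 * c * s) * (2 * c * 1) := by ring
      rw [h3]
      exact h2
    exact h1.mul (hφderiv s hs)
  have hmonog : MonotoneOn g (Set.Icc t 0) := by
    apply monotoneOn_of_deriv_nonneg (convex_Icc t 0)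
    · intro s hs
      exact ((hg s hs.2).continuousAt).continuousWithinAt
    · intro s hs
      rw [interior_Icc] at hs
      exact ((hg s hs.2.le).differentiableAt).differentiableWithinAt
    · intro s hs
      rw [interior_Icc] at hs
      rw [(hg s hs.2.le).deriv]
      have hkey := key s hs.2.le
      have hexps := Real.exp_pos (2 * c * s)
      nlinarith [hφnonneg s]
  have hg0 : g t ≤ g 0 := hmonog (Set.mem_Icc.mpr ⟨le_refl t, ht⟩)
    (Set.mem_Icc.mpr ⟨ht, le_refl 0⟩) ht
  have hφ0 : φ 0 = ∑ i, lam i ^ (2 * α) * (z i) ^ 2 := by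
    show (∑ i, lam i ^ (2 * α) * (u 0 i) ^ 2) = _
    apply Finset.sum_congr rfl
    intro i _
    have h1 : u 0 i = z i := by
      show (Θ 0) z i = z i
      rw [hΘ0]
      rfl
    rw [h1]
  have hgt : Real.exp (2 * c * t) * φ t ≤ φ 0 := by
    have h1 : g 0 = φ 0 := by
      show Real.exp (2 * c * 0) * φ 0 = φ 0
      simp
    rw [← h1]
    exact hg0
  have hE2 : (Real.exp (-(c * t))) ^ 2 * Real.exp (2 * c * t) = 1 := by
    rw [sq, ← Real.exp_add, ← Real.exp_add, show -(c*t) + -(c*t) + 2*c*t = 0 by ring,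
      Real.exp_zero]
  have hφt : φ t ≤ (Real.exp (-(c * t))) ^ 2 * φ 0 := by
    have h1 := mul_le_mul_of_nonneg_left hgt (sq_nonneg (Real.exp (-(c * t))))
    calc φ t = ((Real.exp (-(c*t)))^2 * Real.exp (2*c*t)) * φ t := by rw [hE2]; ring
      _ = (Real.exp (-(c*t)))^2 * (Real.exp (2*c*t) * φ t) := by ring
      _ ≤ (Real.exp (-(c*t)))^2 * φ 0 := h1
  have final : Real.sqrt (φ t) ≤ Real.exp (-(c * t)) * Real.sqrt (φ 0) := by
    calc Real.sqrt (φ t) ≤ Real.sqrt ((Real.exp (-(c*t)))^2 * φ 0) := Real.sqrt_le_sqrt hφt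
      _ = Real.exp (-(c*t)) * Real.sqrt (φ 0) := by
        rw [Real.sqrt_mul (sq_nonneg _), Real.sqrt_sq (Real.exp_pos _).le]
  rw [hφ0] at final
  exact final
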